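/- For positive reals a, b with a ≠ b, √(G(a,b)·I(a,b)) < L(a,b) < (G(a,b) + I(a,b))/2. -/

import Mathlib

open Real Set Filter Topology

noncomputable def SO (A B C D E F G P R : ℝ) (x : ℝ) : ℝ :=
  A*Real.sinh x + B*Real.sinh (2*x) + C*Real.sinh (3*x)
    + D*(x*Real.cosh x) + E*(x*Real.cosh (2*x)) + F*(x^2*Real.sinh x) + G*(x^2*Real.sinh (2*x))
    + P*x^3 + R*x

noncomputable def SE (A B C D E F G P c : ℝ) (x : ℝ) : ℝ :=
  A*Real.cosh x + B*Real.cosh (2*x) + C*Real.cosh (3*x)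
    + D*(x*Real.sinh x) + E*(x*Real.sinh (2*x)) + F*(x^2*Real.cosh x) + G*(x^2*Real.cosh (2*x))
    + P*x^2 + c

lemma sinh2_deriv (s : ℝ) : HasDerivAt (fun x : ℝ => Real.sinh (2*x)) (2*Real.cosh (2*s)) s := by
  have h := (Real.hasDerivAt_sinh (2*s)).comp s ((hasDerivAt_id s).const_mul 2)
  simp only [Function.comp_def, id_eq] at h
  refine h.congr_deriv ?_
  ring

lemma sinh3_deriv (s : ℝ) : HasDerivAt (fun x : ℝ => Real.sinh (3*x)) (3*Real.cosh (3*s)) s := by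
  have h := (Real.hasDerivAt_sinh (3*s)).comp s ((hasDerivAt_id s).const_mul 3)
  simp only [Function.comp_def, id_eq] at h
  refine h.congr_deriv ?_
  ring

lemma cosh2_deriv (s : ℝ) : HasDerivAt (fun x : ℝ => Real.cosh (2*x)) (2*Real.sinh (2*s)) s := by
  have h := (Real.hasDerivAt_cosh (2*s)).comp s ((hasDerivAt_id s).const_mul 2)
  simp only [Function.comp_def, id_eq] at h
  refine h.congr_deriv ?_
  ring

lemma cosh3_deriv (s : ℝ) : HasDerivAt (fun x : ℝ => Real.cosh (3*x)) (3*Real.sinh (3*s)) s := by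
  have h := (Real.hasDerivAt_cosh (3*s)).comp s ((hasDerivAt_id s).const_mul 3)
  simp only [Function.comp_def, id_eq] at h
  refine h.congr_deriv ?_
  ring

lemma SO_deriv (A B C D E F G P R : ℝ) (s : ℝ) :
    HasDerivAt (SO A B C D E F G P R)
      (SE (A+D) (2*B+E) (3*C) (D+2*F) (2*E+2*G) F (2*G) (3*P) R s) s := by
  unfold SO SE
  have h1 := (Real.hasDerivAt_sinh s).const_mul A
  have h2 := (sinh2_deriv s).const_mul B
  have h3 := (sinh3_deriv s).const_mul C
  have h4 := (((hasDerivAt_id s).mul (Real.hasDerivAt_cosh s))).const_mul D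
  have h5 := (((hasDerivAt_id s).mul (cosh2_deriv s))).const_mul E
  have h6 := (((hasDerivAt_pow 2 s)).mul (Real.hasDerivAt_sinh s)).const_mul F
  have h7 := (((hasDerivAt_pow 2 s)).mul (sinh2_deriv s)).const_mul G
  have h8 := (hasDerivAt_pow 3 s).const_mul P
  have h9 := (hasDerivAt_id s).const_mul R
  have := ((((((((h1.add h2).add h3).add h4).add h5).add h6).add h7).add h8).add h9)
  refine this.congr_deriv ?_
  simp only [id_eq]
  push_cast
  ring

lemma SE_deriv (A B C D E F G P c : ℝ) (s : ℝ) :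
    HasDerivAt (SE A B C D E F G P c)
      (SO (A+D) (2*B+E) (3*C) (D+2*F) (2*E+2*G) F (2*G) 0 (2*P) s) s := by
  unfold SO SE
  have h1 := (Real.hasDerivAt_cosh s).const_mul A
  have h2 := (cosh2_deriv s).const_mul B
  have h3 := (cosh3_deriv s).const_mul C
  have h4 := (((hasDerivAt_id s).mul (Real.hasDerivAt_sinh s))).const_mul D
  have h5 := (((hasDerivAt_id s).mul (sinh2_deriv s))).const_mul E
  have h6 := (((hasDerivAt_pow 2 s)).mul (Real.hasDerivAt_cosh s)).const_mul F
  have h7 := (((hasDerivAt_pow 2 s)).mul (cosh2_deriv s)).const_mul G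
  have h8 := (hasDerivAt_pow 2 s).const_mul P
  have := (((((((((h1.add h2).add h3).add h4).add h5).add h6).add h7).add h8).add (hasDerivAt_const s c)))
  refine this.congr_deriv ?_
  simp only [id_eq]
  push_cast
  ring

lemma descent {f g : ℝ → ℝ} (hd : ∀ s, HasDerivAt f (g s) s) (h0 : f 0 = 0)
    (hg : ∀ s, 0 < s → 0 < g s) : ∀ s, 0 < s → 0 < f s := by
  have hmono : StrictMonoOn f (Ici 0) := by
    apply strictMonoOn_of_deriv_pos (convex_Ici 0)
    · exact fun x _ => (hd x).continuousAt.continuousWithinAt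
    · intro x hx
      rw [interior_Ici] at hx
      rw [(hd x).deriv]
      exact hg x hx
  intro s hs
  have := hmono self_mem_Ici (mem_Ici.2 hs.le) hs
  rwa [h0] at this


-- s*cosh s - sinh s > 0 for s > 0
lemma sc_pos : ∀ s : ℝ, 0 < s → 0 < s*Real.cosh s - Real.sinh s := by
  have h := descent (f := SO (-1) 0 0 1 0 0 0 0 0) (fun s => SO_deriv (-1) 0 0 1 0 0 0 0 0 s)
    (by simp [SO]) (fun s hs => by
      have : (0:ℝ) < s * Real.sinh s := mul_pos hs (Real.sinh_pos_iff.2 hs)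
      simp [SE]; norm_num; linarith)
  intro s hs
  have := h s hs
  simp only [SO] at this
  norm_num at this
  linarith

-- cosh lower bound
lemma cosh_lb (s : ℝ) (hs : 0 ≤ s) : 1 + s^2/2 ≤ Real.cosh s := by
  have h2 : Real.cosh s = 1 + 2 * Real.sinh (s/2)^2 := by
    have := Real.cosh_two_mul (s/2)
    have hc := Real.cosh_sq (s/2)
    rw [show 2*(s/2) = s by ring] at this
    rw [this, hc]; ring
  have hb : s/2 ≤ Real.sinh (s/2) := Real.self_le_sinh_iff.2 (by linarith)
  nlinarith [Real.sinh_nonneg_iff.2 (by linarith : (0:ℝ) ≤ s/2)]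

lemma q7_pos : ∀ s : ℝ, 0 ≤ s → 0 < SE (-171) (-1344) 2187 (-56) (-896) (-4) (-128) 0 0 s := by
  intro s hs
  have hc1 : 1 ≤ Real.cosh s := Real.one_le_cosh s
  have hh0 : 0 ≤ Real.sinh s := Real.sinh_nonneg_iff.2 hs
  have hsh : s ≤ Real.sinh s := Real.self_le_sinh_iff.2 hs
  have hpy : Real.cosh s ^ 2 = Real.sinh s ^ 2 + 1 := Real.cosh_sq s
  have hq : s^2 ≤ 2*(Real.cosh s - 1) := by have := cosh_lb s hs; nlinarith
  simp only [SE, Real.cosh_two_mul, Real.cosh_three_mul, Real.sinh_two_mul]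
  set c := Real.cosh s
  set h := Real.sinh s
  nlinarith [mul_nonneg (sub_nonneg.2 hsh) hh0, mul_nonneg (mul_nonneg (sub_nonneg.2 hsh) hh0) (le_trans zero_le_one hc1),
    mul_nonneg (sub_nonneg.2 hq) (le_trans zero_le_one hc1),
    mul_nonneg (mul_nonneg (sub_nonneg.2 hq) (le_trans zero_le_one hc1)) (le_trans zero_le_one hc1),
    sq_nonneg (c-1), mul_nonneg (mul_nonneg (sub_nonneg.2 hc1) (sub_nonneg.2 hc1)) (le_trans zero_le_one hc1),
    sq_nonneg s, sq_nonneg h]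

lemma q6_pos : ∀ s : ℝ, 0 < s → 0 < SO (-123) (-480) 729 (-48) (-384) (-4) (-64) 0 0 s := by
  refine descent (fun s => SO_deriv (-123) (-480) 729 (-48) (-384) (-4) (-64) 0 0 s) (by simp [SO]) ?_
  intro s hs
  have := q7_pos s hs.le
  norm_num
  convert this using 2 <;> norm_num

lemma q5_pos : ∀ s : ℝ, 0 < s → 0 < SE (-83) (-160) 243 (-40) (-160) (-4) (-32) 0 0 s := by
  refine descent (fun s => SE_deriv (-83) (-160) 243 (-40) (-160) (-4) (-32) 0 0 s) (by norm_num [SE]) ?_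
  intro s hs
  have := q6_pos s hs
  norm_num
  convert this using 2 <;> norm_num

lemma q4_pos : ∀ s : ℝ, 0 < s → 0 < SO (-51) (-48) 81 (-32) (-64) (-4) (-16) 0 0 s := by
  refine descent (fun s => SO_deriv (-51) (-48) 81 (-32) (-64) (-4) (-16) 0 0 s) (by simp [SO]) ?_
  intro s hs
  have := q5_pos s hs
  norm_num
  convert this using 2 <;> norm_num

lemma q3_pos : ∀ s : ℝ, 0 < s → 0 < SE (-27) (-12) 27 (-24) (-24) (-4) (-8) 0 12 s := by
  refine descent (fun s => SE_deriv (-27) (-12) 27 (-24) (-24) (-4) (-8) 0 12 s) (by norm_num [SE]) ?_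
  intro s hs
  have := q4_pos s hs
  norm_num
  convert this using 2 <;> norm_num

lemma q2_pos : ∀ s : ℝ, 0 < s → 0 < SO (-11) (-2) 9 (-16) (-8) (-4) (-4) 0 12 s := by
  refine descent (fun s => SO_deriv (-11) (-2) 9 (-16) (-8) (-4) (-4) 0 12 s) (by simp [SO]) ?_
  intro s hs
  have := q3_pos s hs
  norm_num
  convert this using 2 <;> norm_num

lemma q1_pos : ∀ s : ℝ, 0 < s → 0 < SE (-3) 0 3 (-8) (-2) (-4) (-2) 6 0 s := by
  refine descent (fun s => SE_deriv (-3) 0 3 (-8) (-2) (-4) (-2) 6 0 s) (by norm_num [SE]) ?_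
  intro s hs
  have := q2_pos s hs
  norm_num
  convert this using 2 <;> norm_num

lemma q0_pos : ∀ s : ℝ, 0 < s → 0 < SO (-3) 0 1 0 0 (-4) (-1) 2 0 s := by
  refine descent (fun s => SO_deriv (-3) 0 1 0 0 (-4) (-1) 2 0 s) (by simp [SO]) ?_
  intro s hs
  have := q1_pos s hs
  norm_num
  convert this using 2 <;> norm_num

lemma Qprod_pos : ∀ s : ℝ, 0 < s →
    0 < 2*Real.sinh s^3 + s^3 - s^2*Real.sinh s*Real.cosh s - 2*s^2*Real.sinh s := by
  intro s hs
  have := q0_pos s hs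
  simp only [SO, Real.sinh_three_mul, Real.sinh_two_mul] at this
  norm_num at this
  nlinarith [this]

lemma e2_pos : ∀ s : ℝ, 0 < s → 0 < SE 0 (-4) 0 0 4 0 0 0 4 s := by
  intro s hs
  simp only [SE, Real.cosh_two_mul, Real.sinh_two_mul]
  have h1 := sc_pos s hs
  have h2 := Real.sinh_pos_iff.2 hs
  have hpy : Real.cosh s ^ 2 = Real.sinh s ^ 2 + 1 := Real.cosh_sq s
  nlinarith [mul_pos h2 h1]

lemma e1_pos : ∀ s : ℝ, 0 < s → 0 < SO 0 (-3) 0 0 2 0 0 0 4 s := by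
  refine descent (fun s => SO_deriv 0 (-3) 0 0 2 0 0 0 4 s) (by simp [SO]) ?_
  intro s hs
  have := e2_pos s hs
  norm_num
  convert this using 2 <;> norm_num

lemma e0_pos : ∀ s : ℝ, 0 < s → 0 < SE 0 (-2) 0 0 1 0 0 2 2 s := by
  refine descent (fun s => SE_deriv 0 (-2) 0 0 1 0 0 2 2 s) (by norm_num [SE]) ?_
  intro s hs
  have := e1_pos s hs
  norm_num
  convert this using 2 <;> norm_num

lemma gprod_pos : ∀ s : ℝ, 0 < s →
    0 < s*Real.sinh s*Real.cosh s + s^2 - 2*Real.sinh s^2 := by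
  intro s hs
  have := e0_pos s hs
  simp only [SE, Real.cosh_two_mul, Real.sinh_two_mul] at this
  have hpy : Real.cosh s ^ 2 = Real.sinh s ^ 2 + 1 := Real.cosh_sq s
  norm_num at this
  nlinarith [this]



noncomputable def Ff (s : ℝ) : ℝ :=
  2*Real.log (Real.sinh s) - 2*Real.log s - s*Real.cosh s/Real.sinh s + 1

noncomputable def Kf (s : ℝ) : ℝ :=
  s*Real.cosh s/Real.sinh s - 1 - Real.log (2*Real.sinh s/s - 1)

lemma pos_lim {f f' : ℝ → ℝ} (hd : ∀ s, 0 < s → HasDerivAt f (f' s) s)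
    (hp : ∀ s, 0 < s → 0 < f' s) (hlim : Tendsto f (𝓝[>] (0:ℝ)) (𝓝 0)) :
    ∀ s, 0 < s → 0 < f s := by
  have hmono : StrictMonoOn f (Ioi 0) := by
    apply strictMonoOn_of_deriv_pos (convex_Ioi 0)
    · exact fun x hx => (hd x hx).continuousAt.continuousWithinAt
    · intro x hx
      rw [interior_Ioi] at hx
      rw [(hd x hx).deriv]
      exact hp x hx
  intro s hs
  have h1 : f (s/2) < f s := hmono (mem_Ioi.2 (by linarith)) (mem_Ioi.2 hs) (by linarith)
  have h2 : (0:ℝ) ≤ f (s/2) := by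
    refine le_of_tendsto hlim ?_
    filter_upwards [Ioo_mem_nhdsGT_of_mem (⟨le_refl (0:ℝ), by linarith⟩ : (0:ℝ) ∈ Ico 0 (s/2))] with t ht
    exact (hmono (mem_Ioi.2 ht.1) (mem_Ioi.2 (by linarith [ht.2])) ht.2).le
  linarith

lemma sinh_div_tendsto : Tendsto (fun s : ℝ => Real.sinh s / s) (𝓝[>] (0:ℝ)) (𝓝 1) := by
  have h := (Real.hasDerivAt_sinh 0)
  rw [hasDerivAt_iff_tendsto_slope] at h
  rw [Real.cosh_zero] at h
  have h2 : Tendsto (slope Real.sinh 0) (𝓝[>] (0:ℝ)) (𝓝 1) :=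
    h.mono_left (nhdsWithin_mono _ (fun x hx => ne_of_gt hx))
  refine h2.congr' ?_
  filter_upwards [self_mem_nhdsWithin] with t (ht : 0 < t)
  simp [slope_def_field, Real.sinh_zero]

lemma cosh_tendsto : Tendsto (fun s : ℝ => Real.cosh s) (𝓝[>] (0:ℝ)) (𝓝 1) := by
  have := (Real.continuous_cosh.tendsto 0).mono_left (nhdsWithin_le_nhds (s := Ioi (0:ℝ)))
  simpa using this

lemma Ff_lim : Tendsto Ff (𝓝[>] (0:ℝ)) (𝓝 0) := by
  have hq : Tendsto (fun s : ℝ => Real.cosh s / (Real.sinh s / s)) (𝓝[>] (0:ℝ)) (𝓝 1) := by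
    simpa [Pi.div_def] using cosh_tendsto.div sinh_div_tendsto one_ne_zero
  have hlog : Tendsto (fun s : ℝ => Real.log (Real.sinh s / s)) (𝓝[>] (0:ℝ)) (𝓝 0) := by
    have := (Real.continuousAt_log one_ne_zero).tendsto.comp sinh_div_tendsto
    simpa [Function.comp_def] using this
  have h : Tendsto (fun s : ℝ => 2*Real.log (Real.sinh s / s) - Real.cosh s / (Real.sinh s / s) + 1)
      (𝓝[>] (0:ℝ)) (𝓝 0) := by
    have := ((hlog.const_mul 2).sub hq).add_const 1
    simpa using this
  refine h.congr' ?_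
  filter_upwards [self_mem_nhdsWithin] with t (ht : 0 < t)
  have hsinh : Real.sinh t ≠ 0 := ne_of_gt (Real.sinh_pos_iff.2 ht)
  have ht' : t ≠ 0 := ne_of_gt ht
  unfold Ff
  rw [Real.log_div hsinh ht']
  field_simp

lemma Kf_lim : Tendsto Kf (𝓝[>] (0:ℝ)) (𝓝 0) := by
  have hq : Tendsto (fun s : ℝ => Real.cosh s / (Real.sinh s / s)) (𝓝[>] (0:ℝ)) (𝓝 1) := by
    simpa [Pi.div_def] using cosh_tendsto.div sinh_div_tendsto one_ne_zero
  have hu : Tendsto (fun s : ℝ => 2*(Real.sinh s/s) - 1) (𝓝[>] (0:ℝ)) (𝓝 1) := by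
    have := (sinh_div_tendsto.const_mul 2).sub_const 1
    norm_num at this
    exact this
  have hlog : Tendsto (fun s : ℝ => Real.log (2*(Real.sinh s/s) - 1)) (𝓝[>] (0:ℝ)) (𝓝 0) := by
    have := (Real.continuousAt_log one_ne_zero).tendsto.comp hu
    simpa [Function.comp_def] using this
  have h : Tendsto (fun s : ℝ => Real.cosh s / (Real.sinh s / s) - 1 - Real.log (2*(Real.sinh s/s) - 1))
      (𝓝[>] (0:ℝ)) (𝓝 0) := by
    have := (hq.sub_const 1).sub hlog
    simpa using this
  refine h.congr' ?_
  filter_upwards [self_mem_nhdsWithin] with t (ht : 0 < t)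
  have ht' : t ≠ 0 := ne_of_gt ht
  unfold Kf
  rw [show 2*(Real.sinh t/t) - 1 = 2*Real.sinh t/t - 1 by ring]
  congr 1
  field_simp

lemma Ff_deriv (s : ℝ) (hs : 0 < s) :
    HasDerivAt Ff ((s*Real.sinh s*Real.cosh s + s^2 - 2*Real.sinh s^2)/(s*Real.sinh s^2)) s := by
  have hsinh : Real.sinh s ≠ 0 := ne_of_gt (Real.sinh_pos_iff.2 hs)
  have hs' : s ≠ 0 := ne_of_gt hs
  have h1 : HasDerivAt (fun x : ℝ => 2*Real.log (Real.sinh x)) (2*(Real.cosh s/Real.sinh s)) s :=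
    ((Real.hasDerivAt_sinh s).log hsinh).const_mul 2
  have h2 : HasDerivAt (fun x : ℝ => 2*Real.log x) (2*(1/s)) s := by
    simpa using (Real.hasDerivAt_log hs').const_mul 2
  have h3 : HasDerivAt (fun x : ℝ => x*Real.cosh x/Real.sinh x)
      (((1*Real.cosh s + s*Real.sinh s)*Real.sinh s - s*Real.cosh s*Real.cosh s)/Real.sinh s^2) s :=
    ((hasDerivAt_id s).mul (Real.hasDerivAt_cosh s)).div (Real.hasDerivAt_sinh s) hsinh
  have h := ((h1.sub h2).sub h3).add_const 1
  refine h.congr_deriv ?_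
  have hpy : Real.cosh s ^ 2 = Real.sinh s ^ 2 + 1 := Real.cosh_sq s
  field_simp
  linear_combination (s^2) * hpy

lemma Kf_deriv (s : ℝ) (hs : 0 < s) :
    HasDerivAt Kf ((2*Real.sinh s^3 + s^3 - s^2*Real.sinh s*Real.cosh s - 2*s^2*Real.sinh s)
      /(s*(2*Real.sinh s - s)*Real.sinh s^2)) s := by
  have hsinhpos : 0 < Real.sinh s := Real.sinh_pos_iff.2 hs
  have hsinh : Real.sinh s ≠ 0 := ne_of_gt hsinhpos
  have hs' : s ≠ 0 := ne_of_gt hs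
  have hself : s < Real.sinh s := Real.self_lt_sinh_iff.2 hs
  have hu : 0 < 2*Real.sinh s/s - 1 := by
    rw [lt_sub_iff_add_lt, zero_add, lt_div_iff₀ hs]
    linarith
  have h3 : HasDerivAt (fun x : ℝ => x*Real.cosh x/Real.sinh x)
      (((1*Real.cosh s + s*Real.sinh s)*Real.sinh s - s*Real.cosh s*Real.cosh s)/Real.sinh s^2) s :=
    ((hasDerivAt_id s).mul (Real.hasDerivAt_cosh s)).div (Real.hasDerivAt_sinh s) hsinh
  have h4 : HasDerivAt (fun x : ℝ => 2*Real.sinh x/x - 1)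
      ((2*Real.cosh s*s - 2*Real.sinh s*1)/s^2) s :=
    (((Real.hasDerivAt_sinh s).const_mul 2).div (hasDerivAt_id s) hs').sub_const 1
  have h5 : HasDerivAt (fun x : ℝ => Real.log (2*Real.sinh x/x - 1))
      (((2*Real.cosh s*s - 2*Real.sinh s*1)/s^2)/(2*Real.sinh s/s - 1)) s :=
    h4.log (ne_of_gt hu)
  have h := (h3.sub_const 1).sub h5
  refine h.congr_deriv ?_
  have hpy : Real.cosh s ^ 2 = Real.sinh s ^ 2 + 1 := Real.cosh_sq s
  have hune : (2*Real.sinh s - s) ≠ 0 := by linarith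
  have hrw : 2*Real.sinh s/s - 1 = (2*Real.sinh s - s)/s := by field_simp
  rw [hrw]
  have hune' : Real.sinh s * 2 - s ≠ 0 := by intro h; apply hune; linarith
  field_simp
  linear_combination (-(s^2)*(2*Real.sinh s - s)) * hpy

lemma Ff_pos : ∀ s : ℝ, 0 < s → 0 < Ff s := by
  refine pos_lim (f' := fun s => (s*Real.sinh s*Real.cosh s + s^2 - 2*Real.sinh s^2)/(s*Real.sinh s^2))
    (fun s hs => Ff_deriv s hs) (fun s hs => ?_) Ff_lim
  have h1 : (0:ℝ) < Real.sinh s := Real.sinh_pos_iff.2 hs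
  exact div_pos (gprod_pos s hs) (by positivity)

lemma Kf_pos : ∀ s : ℝ, 0 < s → 0 < Kf s := by
  refine pos_lim (f' := fun s => (2*Real.sinh s^3 + s^3 - s^2*Real.sinh s*Real.cosh s - 2*s^2*Real.sinh s)
      /(s*(2*Real.sinh s - s)*Real.sinh s^2)) (fun s hs => Kf_deriv s hs) (fun s hs => ?_) Kf_lim
  have h1 : (0:ℝ) < Real.sinh s := Real.sinh_pos_iff.2 hs
  have h2 : s < Real.sinh s := Real.self_lt_sinh_iff.2 hs
  have h3 : (0:ℝ) < 2*Real.sinh s - s := by linarith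
  exact div_pos (Qprod_pos s hs) (by positivity)



lemma core (c s : ℝ) (hc : 0 < c) (hs : 0 < s) :
    Real.sqrt (c * (c * Real.exp (s*Real.cosh s/Real.sinh s - 1))) < c * (Real.sinh s/s) ∧
    c * (Real.sinh s/s) < (c + c * Real.exp (s*Real.cosh s/Real.sinh s - 1))/2 := by
  have hsinh : 0 < Real.sinh s := Real.sinh_pos_iff.2 hs
  have hself : s < Real.sinh s := Real.self_lt_sinh_iff.2 hs
  set X := s*Real.cosh s/Real.sinh s with hX
  constructor
  · -- left
    have hF := Ff_pos s hs
    unfold Ff at hF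
    have hlog : (X - 1)/2 < Real.log (Real.sinh s/s) := by
      rw [Real.log_div (ne_of_gt hsinh) (ne_of_gt hs)]
      rw [← hX] at hF
      linarith
    have hexp : Real.exp ((X-1)/2) < Real.sinh s/s := by
      have h := Real.exp_lt_exp.2 hlog
      rwa [Real.exp_log (by positivity)] at h
    have hsq : (c*Real.exp ((X-1)/2))^2 = c*(c*Real.exp (X-1)) := by
      rw [mul_pow, sq, sq, ← Real.exp_add, show (X-1)/2 + (X-1)/2 = X-1 by ring]
      ring
    rw [← hsq, Real.sqrt_sq (by positivity)]
    exact mul_lt_mul_of_pos_left hexp hc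
  · -- right
    have hK := Kf_pos s hs
    unfold Kf at hK
    have hu : (0:ℝ) < 2*Real.sinh s/s - 1 := by
      rw [lt_sub_iff_add_lt, zero_add, lt_div_iff₀ hs]
      linarith
    have hlt : Real.log (2*Real.sinh s/s - 1) < X - 1 := by rw [← hX] at hK; linarith
    have h2 : 2*Real.sinh s/s - 1 < Real.exp (X-1) := by
      have := Real.exp_lt_exp.2 hlt
      rwa [Real.exp_log hu] at this
    have h3 : 2*Real.sinh s/s = 2*(Real.sinh s/s) := by ring
    nlinarith [mul_lt_mul_of_pos_left h2 hc]

lemma main_lt (a b : ℝ) (ha : 0 < a) (hb : 0 < b) (hab : a < b) :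
    Real.sqrt (Real.sqrt (a * b) *
        ((1 / Real.exp 1) * (b ^ b / a ^ a) ^ (1 / (b - a)))) <
      (b - a) / (Real.log b - Real.log a) ∧
    (b - a) / (Real.log b - Real.log a) <
      (Real.sqrt (a * b) + (1 / Real.exp 1) * (b ^ b / a ^ a) ^ (1 / (b - a))) / 2 := by
  set la := Real.log a with hla
  set lb := Real.log b with hlb
  set s := (lb - la)/2 with hsdef
  set m := (la + lb)/2 with hmdef
  have hs : 0 < s := by
    have h := Real.log_lt_log ha hab
    rw [← hla, ← hlb] at h
    rw [hsdef]
    linarith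
  have hc0 : (0:ℝ) < a*b := mul_pos ha hb
  have hcE : Real.sqrt (a*b) = Real.exp m := by
    rw [← Real.exp_log (Real.sqrt_pos.2 hc0), Real.log_sqrt hc0.le, Real.log_mul (ne_of_gt ha) (ne_of_gt hb)]
  set c := Real.exp m with hcdef
  have hc : 0 < c := Real.exp_pos m
  have hA : a = c * Real.exp (-s) := by
    rw [hcdef, ← Real.exp_add, show m + -s = la by rw [hmdef, hsdef]; ring, hla, Real.exp_log ha]
  have hB : b = c * Real.exp s := by
    rw [hcdef, ← Real.exp_add, show m + s = lb by rw [hmdef, hsdef]; ring, hlb, Real.exp_log hb]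
  have key1 : b - a = c*(2*Real.sinh s) := by
    rw [hA, hB, Real.sinh_eq]; ring
  have key2 : lb - la = 2*s := by rw [hsdef]; ring
  have hsinh : 0 < Real.sinh s := Real.sinh_pos_iff.2 hs
  have hLeq : (b - a)/(lb - la) = c * (Real.sinh s/s) := by
    rw [key1, key2]
    field_simp
  have hIeq : (1/Real.exp 1) * (b^b/a^a) ^ (1/(b-a)) = c * Real.exp (s*Real.cosh s/Real.sinh s - 1) := by
    have hprod : (0:ℝ) < b^b/a^a := div_pos (Real.rpow_pos_of_pos hb b) (Real.rpow_pos_of_pos ha a)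
    have hlograt : Real.log (b^b/a^a) = b*lb - a*la := by
      rw [Real.log_div (ne_of_gt (Real.rpow_pos_of_pos hb b)) (ne_of_gt (Real.rpow_pos_of_pos ha a)),
        Real.log_rpow hb, Real.log_rpow ha, hla, hlb]
    have hnum : b*lb - a*la = 2*c*Real.sinh s*m + 2*c*s*Real.cosh s := by
      rw [hA, hB, show lb = m + s by rw [hmdef, hsdef]; ring, show la = m - s by rw [hmdef, hsdef]; ring,
        Real.sinh_eq, Real.cosh_eq]
      ring
    have harg : Real.log (b^b/a^a) * (1/(b-a)) = m + s*Real.cosh s/Real.sinh s := by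
      rw [hlograt, hnum, key1]
      field_simp
    rw [Real.rpow_def_of_pos hprod, harg]
    rw [show m + s*Real.cosh s/Real.sinh s = (s*Real.cosh s/Real.sinh s - 1) + m + 1 by ring]
    rw [Real.exp_add, Real.exp_add]
    field_simp [Real.exp_ne_zero]
    ring
  have hcore := core c s hc hs
  rw [hLeq, hIeq, hcE]
  constructor
  · exact hcore.1
  · exact hcore.2

theorem sqrt_GI_lt_L_lt_avg_GI (a b : ℝ) (ha : 0 < a) (hb : 0 < b) (hab : a ≠ b) :
    Real.sqrt (Real.sqrt (a * b) *
        ((1 / Real.exp 1) * (b ^ b / a ^ a) ^ (1 / (b - a)))) <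
      (b - a) / (Real.log b - Real.log a) ∧
    (b - a) / (Real.log b - Real.log a) <
      (Real.sqrt (a * b) + (1 / Real.exp 1) * (b ^ b / a ^ a) ^ (1 / (b - a))) / 2 := by
  rcases lt_or_gt_of_ne hab with h | h
  · exact main_lt a b ha hb h
  · have hsym := main_lt b a hb ha h
    have e1 : Real.sqrt (b*a) = Real.sqrt (a*b) := by rw [mul_comm]
    have e2 : (a - b)/(Real.log a - Real.log b) = (b - a)/(Real.log b - Real.log a) := by
      rw [show a - b = -(b - a) by ring, show Real.log a - Real.log b = -(Real.log b - Real.log a) by ring,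
        neg_div_neg_eq]
    have e3 : (a^a/b^b) ^ (1/(a-b)) = (b^b/a^a) ^ (1/(b-a)) := by
      have hpos : (0:ℝ) < b^b/a^a := div_pos (Real.rpow_pos_of_pos hb b) (Real.rpow_pos_of_pos ha a)
      have hinv : a^a/b^b = (b^b/a^a)⁻¹ := by
        rw [inv_div]
      rw [hinv, Real.inv_rpow hpos.le, ← Real.rpow_neg hpos.le]
      congr 1
      have h1 : a - b ≠ 0 := sub_ne_zero.2 (ne_of_gt h)
      have h2 : b - a ≠ 0 := sub_ne_zero.2 (ne_of_lt h)
      field_simp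
      ring
    rw [e1, e2, e3] at hsym
    exact hsym
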